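/- Hard direction of the discrete Cheeger inequality: let G be a connected d-regular simple graph on n vertices with adjacency matrix A, and let μ₂ denote the second-largest eigenvalue of A. Then h(G) ≤ √(2d(d − μ₂)), where h(G) is the Cheeger constant of G. -/

import Mathlib

open Classical in
/-- The number of boundary edges `|∂S| = |{(u,v) ∈ ℰ : u ∈ S, v ∉ S}|` of a vertex
set `S` in a finite simple graph `G`. -/
noncomputable def edgeBoundaryCard {V : Type*} [Fintype V] (G : SimpleGraph V)
    (S : Finset V) : ℕ :=
  (Finset.univ.filter (fun p : V × V => p.1 ∈ S ∧ p.2 ∉ S ∧ G.Adj p.1 p.2)).card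

/-- The Cheeger constant (isoperimetric ratio) of a finite simple graph `G` on `n`
vertices: the minimum of `|∂S|/|S|` over nonempty vertex sets `S` with `|S| ≤ n/2`. -/
noncomputable def cheegerConst {V : Type*} [Fintype V] (G : SimpleGraph V) : ℝ :=
  sInf {r : ℝ | ∃ S : Finset V, S.Nonempty ∧ 2 * S.card ≤ Fintype.card V ∧
    r = (edgeBoundaryCard G S : ℝ) / S.card}

open Finset

lemma abel_helper (F : ℕ → ℝ) (n : ℕ) :
    ∑ k ∈ range n, ((k : ℝ) + 1) * (F k - F (k+1)) = (∑ k ∈ range n, F k) - n * F n := by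
  induction n with
  | zero => simp
  | succ m ih =>
      rw [Finset.sum_range_succ, ih, Finset.sum_range_succ]
      push_cast
      ring

lemma card_filter_fin_lt (n k : ℕ) (hk : k ≤ n) :
    ((univ : Finset (Fin n)).filter (fun i : Fin n => (i : ℕ) < k)).card = k := by
  rcases eq_or_lt_of_le hk with h | h
  · subst h
    have : ((univ : Finset (Fin k)).filter (fun i : Fin k => (i : ℕ) < k)) = univ := by
      ext i; simp [i.isLt]
    rw [this, card_univ, Fintype.card_fin]
  · have : ((univ : Finset (Fin n)).filter (fun i : Fin n => (i : ℕ) < k)) = Finset.Iio ⟨k, h⟩ := by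
      ext i; simp [Fin.lt_def]
    rw [this, Fin.card_Iio]

lemma sum_Ico_telescope (f : ℕ → ℝ) (a b : ℕ) (hab : a ≤ b) :
    ∑ k ∈ Finset.Ico a b, (f k - f (k+1)) = f a - f b := by
  rw [Finset.sum_Ico_eq_sub _ hab, Finset.sum_range_sub' f, Finset.sum_range_sub' f]
  ring

lemma sum_adj_left {V : Type*} [Fintype V] (G : SimpleGraph V) [DecidableRel G.Adj]
    {d : ℕ} (hreg : G.IsRegularOfDegree d) (f : V → ℝ) :
    ∑ u, ∑ v, (if G.Adj u v then f u else 0) = d * ∑ u, f u := by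
  have : ∀ u, ∑ v, (if G.Adj u v then f u else 0) = (d : ℝ) * f u := by
    intro u
    rw [← Finset.sum_filter]
    rw [Finset.sum_const]
    have : Finset.univ.filter (fun v => G.Adj u v) = G.neighborFinset u := by
      ext v; simp [SimpleGraph.mem_neighborFinset]
    rw [this]
    have hd : #(G.neighborFinset u) = d := hreg u
    rw [hd, nsmul_eq_mul]
  rw [Finset.sum_congr rfl (fun u _ => this u), Finset.mul_sum]

lemma sum_adj_swap {V : Type*} [Fintype V] (G : SimpleGraph V) [DecidableRel G.Adj]
    (F : V → V → ℝ) :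
    ∑ u, ∑ v, (if G.Adj u v then F u v else 0)
      = ∑ u, ∑ v, (if G.Adj u v then F v u else 0) := by
  rw [Finset.sum_comm]
  congr 1; ext u; congr 1; ext v
  simp only [SimpleGraph.adj_comm]

lemma sum_adj_right {V : Type*} [Fintype V] (G : SimpleGraph V) [DecidableRel G.Adj]
    {d : ℕ} (hreg : G.IsRegularOfDegree d) (f : V → ℝ) :
    ∑ u, ∑ v, (if G.Adj u v then f v else 0) = d * ∑ u, f u := by
  rw [sum_adj_swap, sum_adj_left G hreg]


lemma exists_g {V : Type*} [Fintype V] [DecidableEq V] (G : SimpleGraph V)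
    [DecidableRel G.Adj] (μ₂ : ℝ) (f : V → ℝ) (hf0 : f ≠ 0) (hfsum : ∑ v, f v = 0)
    (hfeig : (G.adjMatrix ℝ).mulVec f = μ₂ • f) :
    ∃ g : V → ℝ, ∑ v, g v = 0 ∧ (G.adjMatrix ℝ).mulVec g = μ₂ • g ∧
        2 * (Finset.univ.filter (fun v => 0 < g v)).card ≤ Fintype.card V ∧
        (Finset.univ.filter (fun v => 0 < g v)).Nonempty := by
  classical
  have hpos : (Finset.univ.filter (fun v => 0 < f v)).Nonempty := by
    by_contra h
    rw [Finset.not_nonempty_iff_eq_empty, Finset.filter_eq_empty_iff] at h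
    push_neg at h
    have := (Finset.sum_eq_zero_iff_of_nonpos (fun v _ => h (Finset.mem_univ v))).mp hfsum
    exact hf0 (funext fun v => this v (Finset.mem_univ v))
  have hneg : (Finset.univ.filter (fun v => f v < 0)).Nonempty := by
    by_contra h
    rw [Finset.not_nonempty_iff_eq_empty, Finset.filter_eq_empty_iff] at h
    push_neg at h
    have := (Finset.sum_eq_zero_iff_of_nonneg (fun v _ => h (Finset.mem_univ v))).mp hfsum
    exact hf0 (funext fun v => this v (Finset.mem_univ v))
  have hdisj : Disjoint (Finset.univ.filter (fun v => 0 < f v))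
      (Finset.univ.filter (fun v => f v < 0)) := by
    rw [Finset.disjoint_filter]
    intro v _ h1 h2
    exact absurd h1 (not_lt.2 (le_of_lt h2))
  have hcards : (Finset.univ.filter (fun v => 0 < f v)).card
      + (Finset.univ.filter (fun v => f v < 0)).card ≤ Fintype.card V := by
    rw [← Finset.card_union_of_disjoint hdisj]
    exact le_trans (Finset.card_le_univ _) (le_of_eq rfl)
  by_cases hcase : 2 * (Finset.univ.filter (fun v => 0 < f v)).card ≤ Fintype.card V
  · exact ⟨f, hfsum, hfeig, hcase, hpos⟩
  · refine ⟨-f, ?_, ?_, ?_, ?_⟩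
    · simp [hfsum]
    · rw [Matrix.mulVec_neg, hfeig, smul_neg]
    · have heq : (Finset.univ.filter (fun v => 0 < (-f) v))
          = (Finset.univ.filter (fun v => f v < 0)) := by
        apply Finset.filter_congr; intro v _; simp
      rw [heq]; omega
    · have heq : (Finset.univ.filter (fun v => 0 < (-f) v))
          = (Finset.univ.filter (fun v => f v < 0)) := by
        apply Finset.filter_congr; intro v _; simp
      rw [heq]; exact hneg


lemma spectral_bound {V : Type*} [Fintype V] [DecidableEq V] (G : SimpleGraph V)
    [DecidableRel G.Adj] (μ₂ : ℝ) (g : V → ℝ)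
    (hgeig : (G.adjMatrix ℝ).mulVec g = μ₂ • g) :
    μ₂ * (∑ v, (max (g v) 0) ^ 2) ≤
      ∑ v, ∑ u, (if G.Adj v u then (max (g v) 0) * (max (g u) 0) else 0) := by
  classical
  set y : V → ℝ := fun v => max (g v) 0 with hy
  have hy0 : ∀ v, 0 ≤ y v := fun v => le_max_right _ _
  have hyg : ∀ v, g v ≤ y v := fun v => le_max_left _ _
  have hAg : ∀ v, ∑ u, (if G.Adj v u then g u else 0) = μ₂ * g v := by
    intro v
    have h1 : (G.adjMatrix ℝ).mulVec g v = μ₂ * g v := by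
      rw [hgeig]; simp [Pi.smul_apply]
    rw [← h1, SimpleGraph.adjMatrix_mulVec_apply]
    rw [← Finset.sum_filter]
    apply Finset.sum_congr _ (fun _ _ => rfl)
    ext u; simp [SimpleGraph.mem_neighborFinset]
  have key : ∀ v, μ₂ * (y v ^ 2) ≤ y v * ∑ u, (if G.Adj v u then y u else 0) := by
    intro v
    have h2 : y v * ∑ u, (if G.Adj v u then g u else 0)
        ≤ y v * ∑ u, (if G.Adj v u then y u else 0) := by
      apply mul_le_mul_of_nonneg_left _ (hy0 v)
      apply Finset.sum_le_sum
      intro u _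
      split
      · exact hyg u
      · exact le_refl 0
    rw [hAg v] at h2
    have h3 : y v * (μ₂ * g v) = μ₂ * y v ^ 2 := by
      rcases le_or_gt (g v) 0 with h | h
      · have : y v = 0 := max_eq_right h
        rw [this]; ring
      · have : y v = g v := max_eq_left (le_of_lt h)
        rw [this]; ring
    rw [h3] at h2
    exact h2
  calc μ₂ * (∑ v, y v ^ 2) = ∑ v, μ₂ * y v ^ 2 := by rw [Finset.mul_sum]
    _ ≤ ∑ v, y v * ∑ u, (if G.Adj v u then y u else 0) :=
        Finset.sum_le_sum (fun v _ => key v)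
    _ = ∑ v, ∑ u, (if G.Adj v u then y v * y u else 0) := by
        apply Finset.sum_congr rfl
        intro v _
        rw [Finset.mul_sum]
        apply Finset.sum_congr rfl
        intro u _
        split <;> ring

/-- Hard direction of the discrete Cheeger inequality: for a connected `d`-regular
finite simple graph `G` with second-largest adjacency eigenvalue `μ₂` (characterized as
the largest eigenvalue of the adjacency matrix on the orthogonal complement of the
all-ones vector), one has `h(G) ≤ √(2d(d - μ₂))`. -/
theorem cheeger_ineq_upper {V : Type*} [Fintype V] [DecidableEq V] (G : SimpleGraph V)
    [DecidableRel G.Adj] (hconn : G.Connected)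
    (d : ℕ) (hreg : G.IsRegularOfDegree d) (μ₂ : ℝ)
    (hμ₂ : IsGreatest {μ : ℝ | ∃ x : V → ℝ, x ≠ 0 ∧ ∑ v, x v = 0 ∧
      (G.adjMatrix ℝ).mulVec x = μ • x} μ₂) :
    cheegerConst G ≤ Real.sqrt (2 * d * ((d : ℝ) - μ₂)) := by
  classical
  obtain ⟨f, hf0, hfsum, hfeig⟩ := hμ₂.1
  set n := Fintype.card V with hn
  set c := Real.sqrt (2 * d * ((d : ℝ) - μ₂)) with hc
  have hc0 : 0 ≤ c := Real.sqrt_nonneg _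
  -- choose g = ±f with small positive support
  obtain ⟨g, hgsum, hgeig, hgcard, hgne⟩ :
      ∃ g : V → ℝ, ∑ v, g v = 0 ∧ (G.adjMatrix ℝ).mulVec g = μ₂ • g ∧
        2 * (Finset.univ.filter (fun v => 0 < g v)).card ≤ n ∧
        (Finset.univ.filter (fun v => 0 < g v)).Nonempty :=
    exists_g G μ₂ f hf0 hfsum hfeig
  set P := Finset.univ.filter (fun v => 0 < g v) with hP
  set m := P.card with hm
  -- the positive part
  set y : V → ℝ := fun v => max (g v) 0 with hy
  have hy0 : ∀ v, 0 ≤ y v := fun v => le_max_right _ _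
  have hyg : ∀ v, g v ≤ y v := fun v => le_max_left _ _
  have hypos : ∀ v, 0 < y v ↔ 0 < g v := by
    intro v; simp [hy, lt_max_iff]
  set S2 := ∑ v, y v ^ 2 with hS2
  have hS2pos : 0 < S2 := by
    obtain ⟨v₀, hv₀⟩ := hgne
    simp only [hP, Finset.mem_filter] at hv₀
    have : 0 < y v₀ := (hypos v₀).2 hv₀.2
    apply Finset.sum_pos' (fun v _ => sq_nonneg _) ⟨v₀, Finset.mem_univ _, by positivity⟩
  -- spectral bound
  have hyAy : μ₂ * S2 ≤ ∑ v, ∑ u, (if G.Adj v u then y v * y u else 0) := by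
    have := spectral_bound G μ₂ g hgeig
    simpa [hy, hS2] using this
  -- Dirichlet energy bound
  have hQ : ∑ v, ∑ u, (if G.Adj v u then (y v - y u)^2 else 0)
      ≤ 2 * ((d : ℝ) - μ₂) * S2 := by
    have hQeq : ∑ v, ∑ u, (if G.Adj v u then (y v - y u)^2 else 0)
        = (∑ v, ∑ u, (if G.Adj v u then y v ^ 2 else 0))
          + (∑ v, ∑ u, (if G.Adj v u then y u ^ 2 else 0))
          - 2 * ∑ v, ∑ u, (if G.Adj v u then y v * y u else 0) := by
      rw [← Finset.sum_add_distrib, Finset.mul_sum, ← Finset.sum_sub_distrib]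
      apply Finset.sum_congr rfl; intro v _
      rw [← Finset.sum_add_distrib, Finset.mul_sum, ← Finset.sum_sub_distrib]
      apply Finset.sum_congr rfl; intro u _
      split <;> ring
    rw [hQeq, sum_adj_left G hreg (fun v => y v ^ 2), sum_adj_right G hreg (fun v => y v ^ 2)]
    rw [← hS2]
    linarith [hyAy]
  have hQ0 : 0 ≤ ∑ v, ∑ u, (if G.Adj v u then (y v - y u)^2 else 0) := by
    apply Finset.sum_nonneg; intro v _; apply Finset.sum_nonneg; intro u _
    split <;> positivity
  have hT : ∑ v, ∑ u, (if G.Adj v u then (y v + y u)^2 else 0)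
      ≤ 4 * (d : ℝ) * S2 := by
    have step : ∑ v, ∑ u, (if G.Adj v u then (y v + y u)^2 else 0)
        ≤ (∑ v, ∑ u, (2 * (if G.Adj v u then y v ^ 2 else 0)
            + 2 * (if G.Adj v u then y u ^ 2 else 0))) := by
      apply Finset.sum_le_sum; intro v _
      apply Finset.sum_le_sum; intro u _
      split
      · nlinarith [sq_nonneg (y v - y u)]
      · norm_num
    have heq : (∑ v, ∑ u, (2 * (if G.Adj v u then y v ^ 2 else 0)
            + 2 * (if G.Adj v u then y u ^ 2 else 0)))
        = 2 * (∑ v, ∑ u, (if G.Adj v u then y v ^ 2 else 0))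
          + 2 * (∑ v, ∑ u, (if G.Adj v u then y u ^ 2 else 0)) := by
      rw [Finset.mul_sum, Finset.mul_sum, ← Finset.sum_add_distrib]
      apply Finset.sum_congr rfl; intro v _
      rw [Finset.mul_sum, Finset.mul_sum, ← Finset.sum_add_distrib]
    rw [heq, sum_adj_left G hreg (fun v => y v ^ 2), sum_adj_right G hreg (fun v => y v ^ 2),
      ← hS2] at step
    linarith [step]
  have hT0 : 0 ≤ ∑ v, ∑ u, (if G.Adj v u then (y v + y u)^2 else 0) := by
    apply Finset.sum_nonneg; intro v _; apply Finset.sum_nonneg; intro u _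
    split <;> positivity
  -- Cauchy–Schwarz bound on B
  set B := ∑ v, ∑ u, (if G.Adj v u then |y v ^ 2 - y u ^ 2| else 0) with hB
  have hBc : B ≤ 2 * c * S2 := by
    set EP := (Finset.univ : Finset (V × V)).filter (fun p => G.Adj p.1 p.2) with hEP
    have convB : B = ∑ p ∈ EP, |y p.1 ^ 2 - y p.2 ^ 2| := by
      rw [hB, hEP, Finset.sum_filter, ← Fintype.sum_prod_type']
    have convQ : ∑ v, ∑ u, (if G.Adj v u then (y v - y u)^2 else 0)
        = ∑ p ∈ EP, (y p.1 - y p.2) ^ 2 := by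
      rw [hEP, Finset.sum_filter, ← Fintype.sum_prod_type']
    have convT : ∑ v, ∑ u, (if G.Adj v u then (y v + y u)^2 else 0)
        = ∑ p ∈ EP, (y p.1 + y p.2) ^ 2 := by
      rw [hEP, Finset.sum_filter, ← Fintype.sum_prod_type']
    have habs : ∀ p : V × V, |y p.1 ^ 2 - y p.2 ^ 2| = |y p.1 - y p.2| * |y p.1 + y p.2| := by
      intro p
      rw [← abs_mul]
      congr 1
      ring
    have hCS : B ^ 2 ≤ (∑ p ∈ EP, (y p.1 - y p.2) ^ 2) * (∑ p ∈ EP, (y p.1 + y p.2) ^ 2) := by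
      rw [convB]
      calc (∑ p ∈ EP, |y p.1 ^ 2 - y p.2 ^ 2|) ^ 2
          = (∑ p ∈ EP, |y p.1 - y p.2| * |y p.1 + y p.2|) ^ 2 := by
            congr 1; exact Finset.sum_congr rfl (fun p _ => habs p)
        _ ≤ (∑ p ∈ EP, |y p.1 - y p.2| ^ 2) * (∑ p ∈ EP, |y p.1 + y p.2| ^ 2) :=
            Finset.sum_mul_sq_le_sq_mul_sq EP _ _
        _ = (∑ p ∈ EP, (y p.1 - y p.2) ^ 2) * (∑ p ∈ EP, (y p.1 + y p.2) ^ 2) := by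
            simp only [sq_abs]
    rw [← convQ, ← convT] at hCS
    have hB0 : 0 ≤ B := by
      rw [hB]
      apply Finset.sum_nonneg; intro v _; apply Finset.sum_nonneg; intro u _
      split
      · exact abs_nonneg _
      · exact le_refl 0
    have hprod : (∑ v, ∑ u, (if G.Adj v u then (y v - y u)^2 else 0))
        * (∑ v, ∑ u, (if G.Adj v u then (y v + y u)^2 else 0))
        ≤ (2 * ((d : ℝ) - μ₂) * S2) * (4 * (d : ℝ) * S2) :=
      mul_le_mul hQ hT hT0 (le_trans hQ0 hQ)
    have hBsq : B ^ 2 ≤ (2 * S2) ^ 2 * (2 * d * ((d : ℝ) - μ₂)) := by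
      calc B ^ 2 ≤ (2 * ((d : ℝ) - μ₂) * S2) * (4 * (d : ℝ) * S2) := le_trans hCS hprod
        _ = (2 * S2) ^ 2 * (2 * d * ((d : ℝ) - μ₂)) := by ring
    have h2S2 : 0 ≤ (2 * S2) ^ 2 := sq_nonneg _
    calc B = Real.sqrt (B ^ 2) := (Real.sqrt_sq hB0).symm
      _ ≤ Real.sqrt ((2 * S2) ^ 2 * (2 * d * ((d : ℝ) - μ₂))) := Real.sqrt_le_sqrt hBsq
      _ = Real.sqrt ((2 * S2) ^ 2) * Real.sqrt (2 * d * ((d : ℝ) - μ₂)) :=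
          Real.sqrt_mul h2S2 _
      _ = (2 * S2) * c := by
          rw [Real.sqrt_sq (by linarith [hS2pos] : (0:ℝ) ≤ 2 * S2), hc]
      _ = 2 * c * S2 := by ring
  -- sorting
  have hnpos : 0 < n := by
    rw [hn]; exact Fintype.card_pos_iff.2 ⟨hgne.choose⟩
  set q : V ≃ Fin n := Fintype.equivFin V with hq
  set σ : Equiv.Perm (Fin n) := Tuple.sort (fun i => -(y (q.symm i))) with hσ
  set e : Fin n ≃ V := σ.trans q.symm with he
  set w : Fin n → ℝ := fun i => y (e i) with hw
  have hw_anti : Antitone w := by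
    intro i j hij
    have h := Tuple.monotone_sort (fun i => -(y (q.symm i))) hij
    simp only [Function.comp_apply] at h
    exact le_of_neg_le_neg h
  set W : ℕ → ℝ := fun k => if h : k < n then w ⟨k, h⟩ else 0 with hW
  have hW_nonneg : ∀ k, 0 ≤ W k := by
    intro k; rw [hW]; dsimp only; split
    · exact hy0 _
    · exact le_refl 0
  have hW_anti : Antitone W := by
    intro a b hab
    rcases lt_or_ge b n with hb | hb
    · have ha : a < n := lt_of_le_of_lt hab hb
      show W b ≤ W a
      rw [hW]; dsimp only
      rw [dif_pos hb, dif_pos ha]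
      exact hw_anti (Fin.mk_le_mk.mpr hab)
    · have hWb : W b = 0 := by rw [hW]; dsimp only; rw [dif_neg (not_lt.2 hb)]
      rw [hWb]; exact hW_nonneg a
  have hWn : W n = 0 := by rw [hW]; simp
  -- level sets
  set S : ℕ → Finset V := fun k => Finset.univ.filter (fun v => ((e.symm v : Fin n) : ℕ) < k)
    with hSdef
  have hS_card : ∀ k, k ≤ n → (S k).card = k := by
    intro k hk
    rw [hSdef]
    have hcb : (Finset.univ.filter (fun v => ((e.symm v : Fin n) : ℕ) < k)).card
        = ((univ : Finset (Fin n)).filter (fun i : Fin n => (i : ℕ) < k)).card := by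
      apply Finset.card_nbij' (fun v => e.symm v) (fun i => e i)
      · intro a ha; simp at ha ⊢; exact ha
      · intro a ha; simp at ha ⊢; exact ha
      · intro a _; simp
      · intro a _; simp
    rw [hcb]
    exact card_filter_fin_lt n k hk
  set bd : ℕ → ℕ := fun k => edgeBoundaryCard G (S k) with hbd
  -- coarea formula
  have hcoarea : ∑ k ∈ range n, (W k ^ 2 - W (k+1) ^ 2) * (2 * (bd (k+1) : ℝ)) = B := by
    set EPF := (Finset.univ : Finset (Fin n × Fin n)).filter
      (fun p => G.Adj (e p.1) (e p.2)) with hEPF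
    have step1 : ∀ k : ℕ, 2 * bd (k+1) =
        (EPF.filter (fun p => ((p.1 : ℕ) ≤ k ∧ k < (p.2 : ℕ))
          ∨ ((p.2 : ℕ) ≤ k ∧ k < (p.1 : ℕ)))).card := by
      intro k
      have hA : (EPF.filter (fun p => ((p.1 : ℕ) ≤ k ∧ k < (p.2 : ℕ)))).card = bd (k+1) := by
        rw [hbd]
        show _ = edgeBoundaryCard G (S (k+1))
        unfold edgeBoundaryCard
        apply Finset.card_nbij' (fun p : Fin n × Fin n => (e p.1, e p.2))
          (fun p : V × V => (e.symm p.1, e.symm p.2))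
        · intro a ha
          simp only [Finset.mem_coe, hEPF, Finset.mem_filter, Finset.mem_univ, true_and] at ha
          simp only [Finset.mem_coe, Finset.mem_filter, Finset.mem_univ, true_and, hSdef,
            Equiv.symm_apply_apply, not_lt]
          exact ⟨by omega, by omega, ha.1⟩
        · intro a ha
          simp only [Finset.mem_coe, Finset.mem_filter, Finset.mem_univ, true_and, hSdef, not_lt] at ha
          simp only [Finset.mem_coe, hEPF, Finset.mem_filter, Finset.mem_univ, true_and,
            Equiv.apply_symm_apply]
          exact ⟨ha.2.2, by omega, by omega⟩
        · intro a _; simp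
        · intro a _; simp
      have hBswap : (EPF.filter (fun p => ((p.2 : ℕ) ≤ k ∧ k < (p.1 : ℕ)))).card
          = (EPF.filter (fun p => ((p.1 : ℕ) ≤ k ∧ k < (p.2 : ℕ)))).card := by
        apply Finset.card_nbij' (fun p : Fin n × Fin n => (p.2, p.1))
          (fun p : Fin n × Fin n => (p.2, p.1))
        · intro a ha
          simp only [Finset.mem_coe, hEPF, Finset.mem_filter, Finset.mem_univ, true_and] at ha ⊢
          exact ⟨ha.1.symm, ha.2⟩
        · intro a ha
          simp only [Finset.mem_coe, hEPF, Finset.mem_filter, Finset.mem_univ, true_and] at ha ⊢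
          exact ⟨ha.1.symm, ha.2⟩
        · intro a _; rfl
        · intro a _; rfl
      have hdisj : Disjoint
          (EPF.filter (fun p => ((p.1 : ℕ) ≤ k ∧ k < (p.2 : ℕ))))
          (EPF.filter (fun p => ((p.2 : ℕ) ≤ k ∧ k < (p.1 : ℕ)))) := by
        rw [Finset.disjoint_filter]
        intro p _ h1 h2
        omega
      rw [Finset.filter_or, Finset.card_union_of_disjoint hdisj, hA, hBswap, hA]
      ring
    have main : ∑ k ∈ range n, (W k ^ 2 - W (k+1) ^ 2) * (2 * (bd (k+1) : ℝ))
        = ∑ p ∈ EPF, ∑ k ∈ range n,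
            (if ((p.1 : ℕ) ≤ k ∧ k < (p.2 : ℕ)) ∨ ((p.2 : ℕ) ≤ k ∧ k < (p.1 : ℕ))
              then (W k ^ 2 - W (k+1) ^ 2) else 0) := by
      rw [← Finset.sum_comm]
      apply Finset.sum_congr rfl
      intro k _
      have h1 : (2 * (bd (k+1) : ℝ)) = ((EPF.filter (fun p => ((p.1 : ℕ) ≤ k ∧ k < (p.2 : ℕ))
          ∨ ((p.2 : ℕ) ≤ k ∧ k < (p.1 : ℕ)))).card : ℝ) := by
        rw [← step1 k]; push_cast; ring
      rw [h1, Finset.card_filter]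
      push_cast
      rw [Finset.mul_sum]
      apply Finset.sum_congr rfl
      intro p _
      split <;> simp
    have inner : ∀ p ∈ EPF, (∑ k ∈ range n,
        (if ((p.1 : ℕ) ≤ k ∧ k < (p.2 : ℕ)) ∨ ((p.2 : ℕ) ≤ k ∧ k < (p.1 : ℕ))
          then (W k ^ 2 - W (k+1) ^ 2) else 0)) = |w p.1 ^ 2 - w p.2 ^ 2| := by
      intro p hp
      simp only [hEPF, Finset.mem_filter, Finset.mem_univ, true_and] at hp
      have hne : (p.1 : ℕ) ≠ (p.2 : ℕ) := by
        intro h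
        exact G.irrefl ((Fin.ext h : p.1 = p.2) ▸ hp)
      have hWa : W (p.1 : ℕ) = w p.1 := by rw [hW]; simp [p.1.isLt]
      have hWb : W (p.2 : ℕ) = w p.2 := by rw [hW]; simp [p.2.isLt]
      have h2n := p.2.isLt
      have h1n := p.1.isLt
      rcases lt_or_gt_of_ne hne with hlt | hlt
      · have hfilter : (range n).filter (fun k => ((p.1 : ℕ) ≤ k ∧ k < (p.2 : ℕ))
            ∨ ((p.2 : ℕ) ≤ k ∧ k < (p.1 : ℕ))) = Finset.Ico (p.1 : ℕ) (p.2 : ℕ) := by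
          ext j
          simp only [Finset.mem_filter, Finset.mem_range, Finset.mem_Ico]
          omega
        rw [← Finset.sum_filter, hfilter,
          sum_Ico_telescope (fun k => W k ^ 2) _ _ (le_of_lt hlt)]
        rw [hWa, hWb]
        have h1 : w p.2 ≤ w p.1 := hw_anti (by rw [Fin.le_def]; omega)
        have h2 : w p.2 ^ 2 ≤ w p.1 ^ 2 := pow_le_pow_left₀ (hy0 _) h1 2
        rw [abs_of_nonneg (by linarith)]
      · have hfilter : (range n).filter (fun k => ((p.1 : ℕ) ≤ k ∧ k < (p.2 : ℕ))
            ∨ ((p.2 : ℕ) ≤ k ∧ k < (p.1 : ℕ))) = Finset.Ico (p.2 : ℕ) (p.1 : ℕ) := by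
          ext j
          simp only [Finset.mem_filter, Finset.mem_range, Finset.mem_Ico]
          omega
        rw [← Finset.sum_filter, hfilter,
          sum_Ico_telescope (fun k => W k ^ 2) _ _ (le_of_lt hlt)]
        rw [hWa, hWb]
        have h1 : w p.1 ≤ w p.2 := hw_anti (by rw [Fin.le_def]; omega)
        have h2 : w p.1 ^ 2 ≤ w p.2 ^ 2 := pow_le_pow_left₀ (hy0 _) h1 2
        rw [abs_sub_comm, abs_of_nonneg (by linarith)]
    have final : ∑ p ∈ EPF, |w p.1 ^ 2 - w p.2 ^ 2| = B := by
      have hBalt : B = ∑ p ∈ (Finset.univ : Finset (V × V)).filter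
          (fun p => G.Adj p.1 p.2), |y p.1 ^ 2 - y p.2 ^ 2| := by
        rw [hB, Finset.sum_filter, ← Fintype.sum_prod_type']
      rw [hBalt]
      apply Finset.sum_nbij' (fun p : Fin n × Fin n => (e p.1, e p.2))
        (fun p : V × V => (e.symm p.1, e.symm p.2))
      · intro a ha
        simp only [hEPF, Finset.mem_filter, Finset.mem_univ, true_and] at ha ⊢
        exact ha
      · intro a ha
        simp only [hEPF, Finset.mem_filter, Finset.mem_univ, true_and,
          Equiv.apply_symm_apply] at ha ⊢
        exact ha
      · intro a _; simp
      · intro a _; simp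
      · intro a _; simp [hw]
    rw [main, Finset.sum_congr rfl inner, final]
  -- Abel summation
  have hAbel : ∑ k ∈ range n, ((k : ℝ) + 1) * (W k ^ 2 - W (k+1) ^ 2) = S2 := by
    have h1 := abel_helper (fun k => W k ^ 2) n
    simp only [hWn] at h1
    rw [h1]
    have h2 : ∑ k ∈ range n, W k ^ 2 = ∑ i : Fin n, w i ^ 2 := by
      rw [← Fin.sum_univ_eq_sum_range (fun k => W k ^ 2) n]
      apply Finset.sum_congr rfl
      intro i _
      rw [hW]
      simp [i.isLt]
    rw [h2]
    have h3 : ∑ i : Fin n, w i ^ 2 = S2 := by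
      rw [hS2, hw]
      exact Equiv.sum_comp e (fun v => y v ^ 2)
    rw [h3]; ring
  -- main existence claim
  have hexists : ∃ k, 1 ≤ k ∧ 2 * k ≤ n ∧ (bd k : ℝ) ≤ c * k := by
    by_contra hcon
    push_neg at hcon
    have hPm : ((Finset.univ : Finset (Fin n)).filter (fun i => 0 < w i)).card = m := by
      rw [hm, hP]
      apply Finset.card_nbij' (fun i : Fin n => e i) (fun v : V => e.symm v)
      · intro a ha
        simp only [Finset.mem_coe, Finset.mem_filter, Finset.mem_univ, true_and] at ha ⊢
        exact (hypos _).1 ha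
      · intro a ha
        simp only [Finset.mem_coe, Finset.mem_filter, Finset.mem_univ, true_and] at ha ⊢
        show 0 < w (e.symm a)
        rw [hw]
        simpa using (hypos a).2 ha
      · intro a _; simp
      · intro a _; simp
    have hfactor : ∀ k, k < n → 0 < W k ^ 2 - W (k+1) ^ 2 →
        0 < (bd (k+1) : ℝ) - c * ((k : ℝ) + 1) := by
      intro k hkn hΔ
      have hWk : 0 < W k := by
        rcases lt_or_eq_of_le (hW_nonneg k) with h | h
        · exact h
        · exfalso
          nlinarith [sq_nonneg (W (k+1)), hΔ, h.symm]
      have hsub : (Finset.univ : Finset (Fin n)).filter (fun i : Fin n => (i : ℕ) < k+1)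
          ⊆ (Finset.univ : Finset (Fin n)).filter (fun i => 0 < w i) := by
        intro i hi
        simp only [Finset.mem_filter, Finset.mem_univ, true_and] at hi ⊢
        have hik : i ≤ (⟨k, hkn⟩ : Fin n) := by rw [Fin.le_def]; simpa using Nat.lt_succ_iff.mp hi
        have h1 : w ⟨k, hkn⟩ ≤ w i := hw_anti hik
        have h2 : W k = w ⟨k, hkn⟩ := by rw [hW]; simp [hkn]
        linarith
      have hk1m : k + 1 ≤ m := by
        have hcc := Finset.card_le_card hsub
        rw [card_filter_fin_lt n (k+1) hkn, hPm] at hcc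
        exact hcc
      have hbdk := hcon (k+1) (by omega) (by omega)
      push_cast at hbdk ⊢
      linarith
    have hsum_nonneg : ∀ k ∈ range n,
        0 ≤ (W k ^ 2 - W (k+1) ^ 2) * ((bd (k+1) : ℝ) - c * ((k : ℝ) + 1)) := by
      intro k hk
      have hΔ : 0 ≤ W k ^ 2 - W (k+1) ^ 2 :=
        sub_nonneg.2 (pow_le_pow_left₀ (hW_nonneg _) (hW_anti (Nat.le_succ k)) 2)
      rcases lt_or_eq_of_le hΔ with h | h
      · exact le_of_lt (mul_pos h (hfactor k (Finset.mem_range.mp hk) h))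
      · rw [← h, zero_mul]
    have hpos_term : ∃ k ∈ range n,
        0 < (W k ^ 2 - W (k+1) ^ 2) * ((bd (k+1) : ℝ) - c * ((k : ℝ) + 1)) := by
      have hsumΔ : ∑ k ∈ range n, (W k ^ 2 - W (k+1) ^ 2) = W 0 ^ 2 := by
        rw [Finset.sum_range_sub' (fun k => W k ^ 2) n, hWn]
        ring
      have hW0 : 0 < W 0 := by
        obtain ⟨v₀, hv₀⟩ := hgne
        rw [hP, Finset.mem_filter] at hv₀
        have hv : 0 < y v₀ := (hypos v₀).2 hv₀.2
        have hW0w : W 0 = w ⟨0, hnpos⟩ := by rw [hW]; simp [hnpos]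
        have h1 : w (e.symm v₀) ≤ w ⟨0, hnpos⟩ := hw_anti (by rw [Fin.le_def]; simp)
        have h2 : w (e.symm v₀) = y v₀ := by rw [hw]; simp
        rw [hW0w]
        linarith
      have hex : ∃ k ∈ range n, 0 < W k ^ 2 - W (k+1) ^ 2 := by
        by_contra hno
        push_neg at hno
        have hle : ∑ k ∈ range n, (W k ^ 2 - W (k+1) ^ 2) ≤ 0 := Finset.sum_nonpos hno
        rw [hsumΔ] at hle
        nlinarith
      obtain ⟨k₀, hk₀, hΔ₀⟩ := hex
      exact ⟨k₀, hk₀, mul_pos hΔ₀ (hfactor k₀ (Finset.mem_range.mp hk₀) hΔ₀)⟩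
    have hsum_pos : 0 < ∑ k ∈ range n,
        (W k ^ 2 - W (k+1) ^ 2) * ((bd (k+1) : ℝ) - c * ((k : ℝ) + 1)) :=
      Finset.sum_pos' hsum_nonneg hpos_term
    have hsum_le : ∑ k ∈ range n,
        (W k ^ 2 - W (k+1) ^ 2) * ((bd (k+1) : ℝ) - c * ((k : ℝ) + 1)) ≤ 0 := by
      have e1 : ∑ k ∈ range n,
          (W k ^ 2 - W (k+1) ^ 2) * ((bd (k+1) : ℝ) - c * ((k : ℝ) + 1))
          = (∑ k ∈ range n, (W k ^ 2 - W (k+1) ^ 2) * (2 * (bd (k+1) : ℝ))) / 2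
            - c * ∑ k ∈ range n, ((k : ℝ) + 1) * (W k ^ 2 - W (k+1) ^ 2) := by
        rw [Finset.sum_div, Finset.mul_sum, ← Finset.sum_sub_distrib]
        apply Finset.sum_congr rfl
        intro k _
        ring
      rw [e1, hcoarea, hAbel]
      linarith [hBc, mul_le_mul_of_nonneg_right (le_refl c) (le_of_lt hS2pos)]
    linarith
  -- conclude
  obtain ⟨k, hk1, hk2, hkc⟩ := hexists
  have hkn : k ≤ n := by omega
  have hScard : (S k).card = k := hS_card k hkn
  have hr_mem : ((bd k : ℝ) / k) ∈ {r : ℝ | ∃ T : Finset V, T.Nonempty ∧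
      2 * T.card ≤ Fintype.card V ∧ r = (edgeBoundaryCard G T : ℝ) / T.card} := by
    refine ⟨S k, ?_, ?_, ?_⟩
    · rw [← Finset.card_pos, hScard]; omega
    · rw [hScard, ← hn]; omega
    · rw [hScard, hbd]
  have hbdd : BddBelow {r : ℝ | ∃ T : Finset V, T.Nonempty ∧
      2 * T.card ≤ Fintype.card V ∧ r = (edgeBoundaryCard G T : ℝ) / T.card} := by
    refine ⟨0, fun r hr => ?_⟩
    obtain ⟨T, _, _, hr⟩ := hr
    rw [hr]; exact div_nonneg (Nat.cast_nonneg _) (Nat.cast_nonneg _)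
  have h1 : cheegerConst G ≤ (bd k : ℝ) / k := csInf_le hbdd hr_mem
  have hkpos : (0 : ℝ) < k := by exact_mod_cast hk1
  have h2 : (bd k : ℝ) / k ≤ c := by
    rw [div_le_iff₀ hkpos]
    exact hkc
  exact le_trans h1 h2
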